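/- Suppose the design matrix X ∈ ℝ^{n×p} and labels y ∈ {0,1}^n satisfy X θ̂ = y for θ̂ = X^+ y, and each class is nonempty. Define n̂_k = #{i : y_i = k}, π̂_k = n̂_k/n, μ̂_k = n̂_k^{-1} Σ_{i: y_i=k} X_i for k ∈ {0,1}, and β̂_0 = −(1/2)(μ̂_0 + μ̂_1)^⊤ θ̂ + [1 − (μ̂_1 − μ̂_0)^⊤ θ̂] π̂_0 π̂_1 log(π̂_1/π̂_0). Then β̂_0 = −1/2 regardless of the data. -/

import Mathlib

open Matrix Finset

/-- If `X θ̂ = y` with labels `y ∈ {0,1}ⁿ` and both classes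
nonempty, then the naive plug-in intercept estimate
`β̂_0 = -(1/2)(μ̂_0+μ̂_1)ᵀθ̂ + [1 - (μ̂_1-μ̂_0)ᵀθ̂] π̂_0 π̂_1 log(π̂_1/π̂_0)`
always equals `-1/2`. -/
theorem naive_intercept_is_minus_half {n p : ℕ}
    (X : Matrix (Fin n) (Fin p) ℝ) (y : Fin n → ℝ) (θ : Fin p → ℝ)
    (hy : ∀ i, y i = 0 ∨ y i = 1)
    (hinterp : X *ᵥ θ = y)
    (n0 n1 : ℕ)
    (hn0 : n0 = (univ.filter (fun i => y i = 0)).card)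
    (hn1 : n1 = (univ.filter (fun i => y i = 1)).card)
    (hpos0 : 0 < n0) (hpos1 : 0 < n1)
    (π0 π1 : ℝ) (hπ0 : π0 = (n0 : ℝ) / n) (hπ1 : π1 = (n1 : ℝ) / n)
    (μ0 μ1 : Fin p → ℝ)
    (hμ0 : μ0 = fun j => (∑ i ∈ univ.filter (fun i => y i = 0), X i j) / n0)
    (hμ1 : μ1 = fun j => (∑ i ∈ univ.filter (fun i => y i = 1), X i j) / n1)
    (β0hat : ℝ)
    (hβ0hat : β0hat = -(1/2) * ((μ0 + μ1) ⬝ᵥ θ)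
      + (1 - (μ1 - μ0) ⬝ᵥ θ) * (π0 * π1) * Real.log (π1 / π0)) :
    β0hat = -(1/2) := by
  have hXy : ∀ i, ∑ j, X i j * θ j = y i := by
    intro i
    have := congrFun hinterp i
    simpa [Matrix.mulVec, dotProduct] using this
  have h0 : μ0 ⬝ᵥ θ = 0 := by
    subst hμ0
    have : (fun j => (∑ i ∈ univ.filter (fun i => y i = 0), X i j) / n0) ⬝ᵥ θ
        = (∑ i ∈ univ.filter (fun i => y i = 0), y i) / n0 := by
      simp only [dotProduct, div_mul_eq_mul_div, ← Finset.sum_div, Finset.sum_mul]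
      rw [Finset.sum_comm]
      congr 1
      exact Finset.sum_congr rfl fun i _ => hXy i
    rw [this]
    have : ∑ i ∈ univ.filter (fun i => y i = 0), y i = 0 := by
      apply Finset.sum_eq_zero
      intro i hi
      exact (Finset.mem_filter.mp hi).2
    simp [this]
  have h1 : μ1 ⬝ᵥ θ = 1 := by
    subst hμ1
    have key : (fun j => (∑ i ∈ univ.filter (fun i => y i = 1), X i j) / n1) ⬝ᵥ θ
        = (∑ i ∈ univ.filter (fun i => y i = 1), y i) / n1 := by
      simp only [dotProduct, div_mul_eq_mul_div, ← Finset.sum_div, Finset.sum_mul]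
      rw [Finset.sum_comm]
      congr 1
      exact Finset.sum_congr rfl fun i _ => hXy i
    rw [key]
    have hsum : ∑ i ∈ univ.filter (fun i => y i = 1), y i = (n1 : ℝ) := by
      rw [hn1]
      rw [Finset.sum_congr rfl (fun i hi => (Finset.mem_filter.mp hi).2)]
      simp
    rw [hsum]
    field_simp
  have hadd : (μ0 + μ1) ⬝ᵥ θ = 1 := by
    rw [add_dotProduct, h0, h1]; ring
  have hsub : (μ1 - μ0) ⬝ᵥ θ = 1 := by
    rw [sub_dotProduct, h0, h1]; ring
  rw [hβ0hat, hadd, hsub]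
  ring
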